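/- Let k ≥ 1 be an integer and n = 8k, and let a, b, c be the generators of the Weierstrass group W_n. Then c·a·b·a = [[1, 2], [1/(4k), (2k+1)/(2k)]] and c·b·a = −[[1, 8k+2], [0, 1]], and the element M = (c·a·b·a)·(c·b·a)^{k−1}·(c·a·b·a) of W_{8k} satisfies |tr M| = 4k + 1/(4k) > 2, and both (−4k, 1) and (4k−2, 1) are eigenvectors of M. Hence M is a hyperbolic element of W_{8k} whose fixed points on the boundary are the integers −4k and 4k−2, i.e. a special element of W_{8k}. -/

import Mathlib

noncomputable section

open Matrix

abbrev SL2R := Matrix.SpecialLinearGroup (Fin 2) ℝ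

/-- Generator `a` of the Weierstrass groups. -/
def Wa : SL2R := ⟨!![1, 2; -1, -1], by norm_num [Matrix.det_fin_two_of]⟩

/-- Generator `b = √n · [[1,1],[-(n+1)/n,-1]]` of the `n`-th Weierstrass group. -/
def Wb (n : ℕ) (hn : 0 < n) : SL2R :=
  ⟨Real.sqrt n • !![1, 1; -((n : ℝ) + 1) / n, -1], by
    have h0 : (0:ℝ) ≤ n := Nat.cast_nonneg n
    have hne : (n : ℝ) ≠ 0 := Nat.cast_ne_zero.mpr hn.ne'
    have h : Real.sqrt n ^ 2 = n := Real.sq_sqrt h0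
    rw [Matrix.det_smul]
    simp only [Matrix.det_fin_two_of, Fintype.card_fin]
    field_simp
    rw [h]; ring⟩

/-- Generator `c = (1/√n) · [[0,n],[-1,0]]` of the `n`-th Weierstrass group. -/
def Wc (n : ℕ) (hn : 0 < n) : SL2R :=
  ⟨(1 / Real.sqrt n) • !![0, (n : ℝ); -1, 0], by
    have h0 : (0:ℝ) ≤ n := Nat.cast_nonneg n
    have hne : (n : ℝ) ≠ 0 := Nat.cast_ne_zero.mpr hn.ne'
    have h : Real.sqrt n ^ 2 = n := Real.sq_sqrt h0
    have hs : Real.sqrt n ≠ 0 := by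
      intro hs; rw [hs] at h; simp at h; exact hne h.symm
    rw [Matrix.det_smul]
    simp only [Matrix.det_fin_two_of, Fintype.card_fin]
    field_simp
    rw [h]; ring⟩

/-- The `n`-th Weierstrass group. -/
def W (n : ℕ) (hn : 0 < n) : Subgroup SL2R :=
  Subgroup.closure {Wa, Wb n hn, Wc n hn}

/-- `γ` fixes the boundary point `x ∈ ℝ`: `(x,1)` is an eigenvector of `γ`. -/
def FixesBoundary (γ : SL2R) (x : ℝ) : Prop :=
  ∃ t : ℝ, t ≠ 0 ∧ (γ : Matrix (Fin 2) (Fin 2) ℝ).mulVec ![x, 1] = t • ![x, 1]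

/-- `γ` fixes the boundary point `∞`: `(1,0)` is an eigenvector of `γ`. -/
def FixesInfty (γ : SL2R) : Prop :=
  ∃ t : ℝ, t ≠ 0 ∧ (γ : Matrix (Fin 2) (Fin 2) ℝ).mulVec ![1, 0] = t • ![1, 0]

/-- `γ ∈ SL(2,ℝ)` is parabolic: `γ ≠ ±1` and `|tr γ| = 2`. -/
def IsParabolic (γ : SL2R) : Prop :=
  γ ≠ 1 ∧ γ ≠ -1 ∧ |Matrix.trace (γ : Matrix (Fin 2) (Fin 2) ℝ)| = 2

/-- `γ ∈ SL(2,ℝ)` is hyperbolic: `|tr γ| > 2`. -/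
def IsHyperbolic (γ : SL2R) : Prop :=
  2 < |Matrix.trace (γ : Matrix (Fin 2) (Fin 2) ℝ)|

lemma caba_coe (n : ℕ) (hn : 0 < n) :
    ((Wc n hn * Wa * Wb n hn * Wa : SL2R) : Matrix (Fin 2) (Fin 2) ℝ) =
    !![1, 2; 2 / (n:ℝ), ((n:ℝ) + 4) / n] := by
  have hne : (n:ℝ) ≠ 0 := Nat.cast_ne_zero.mpr hn.ne'
  have h0 : (0:ℝ) ≤ n := Nat.cast_nonneg n
  have hs2 : Real.sqrt n * Real.sqrt n = n := Real.mul_self_sqrt h0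
  have hs : Real.sqrt n ≠ 0 := by
    intro h; rw [h] at hs2; simp at hs2; exact hne hs2.symm
  simp only [Matrix.SpecialLinearGroup.coe_mul]
  simp only [Wa, Wb, Wc]
  ext i j
  fin_cases i <;> fin_cases j <;>
    · simp [Matrix.mul_apply, Fin.sum_univ_two]
      try field_simp
      try ring_nf
      try rw [Real.sq_sqrt h0]
      try ring

lemma cba_coe (n : ℕ) (hn : 0 < n) :
    ((Wc n hn * Wb n hn * Wa : SL2R) : Matrix (Fin 2) (Fin 2) ℝ) =
    -(!![1, (n:ℝ) + 2; 0, 1]) := by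
  have hne : (n:ℝ) ≠ 0 := Nat.cast_ne_zero.mpr hn.ne'
  have h0 : (0:ℝ) ≤ n := Nat.cast_nonneg n
  have hs2 : Real.sqrt n * Real.sqrt n = n := Real.mul_self_sqrt h0
  have hs : Real.sqrt n ≠ 0 := by
    intro h; rw [h] at hs2; simp at hs2; exact hne hs2.symm
  simp only [Matrix.SpecialLinearGroup.coe_mul]
  simp only [Wa, Wb, Wc]
  ext i j
  fin_cases i <;> fin_cases j <;>
    · simp [Matrix.mul_apply, Fin.sum_univ_two]
      try field_simp
      try ring_nf
      try rw [Real.sq_sqrt h0]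
      try ring

lemma upow (c : ℝ) (j : ℕ) :
    (!![1, c; 0, 1] : Matrix (Fin 2) (Fin 2) ℝ) ^ j = !![1, (j:ℝ) * c; 0, 1] := by
  induction j with
  | zero => simp [Matrix.one_fin_two]
  | succ m ih =>
      rw [pow_succ, ih]
      ext i j
      fin_cases i <;> fin_cases j <;>
        · simp [Matrix.mul_apply, Fin.sum_univ_two]
          try push_cast
          try ring

/-- The element `M = (caba)·(cba)^{k−1}·(caba)` of the Weierstrass group `W_{8k}`. -/
def specialW8k (k : ℕ) (hk : 1 ≤ k) : SL2R :=
  (Wc (8 * k) (by omega) * Wa * Wb (8 * k) (by omega) * Wa) *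
    (Wc (8 * k) (by omega) * Wb (8 * k) (by omega) * Wa) ^ (k - 1) *
    (Wc (8 * k) (by omega) * Wa * Wb (8 * k) (by omega) * Wa)

lemma M_coe (k : ℕ) (hk : 1 ≤ k) :
    ((specialW8k k hk : SL2R) : Matrix (Fin 2) (Fin 2) ℝ) =
    ((-1:ℝ)^(k-1)) • !![2*(k:ℝ) - 1/2, 8*(k:ℝ)^2 - 2*k - 1;
                        1/2 + 1/(8*(k:ℝ)), 2*(k:ℝ) + 1/2 + 1/(4*(k:ℝ))] := by
  have hk0 : (k:ℝ) ≠ 0 := Nat.cast_ne_zero.mpr (by omega)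
  have hpos : 0 < 8 * k := by omega
  rw [specialW8k, Matrix.SpecialLinearGroup.coe_mul, Matrix.SpecialLinearGroup.coe_mul,
      Matrix.SpecialLinearGroup.coe_pow, caba_coe, cba_coe,
      ← neg_one_smul ℝ (!![1, ((8*k:ℕ):ℝ) + 2; 0, 1]), smul_pow, upow,
      mul_smul_comm, smul_mul_assoc]
  congr 1
  have hc : ((k - 1 : ℕ) : ℝ) = (k:ℝ) - 1 := by
    push_cast [Nat.cast_sub hk]; ring
  ext i j
  fin_cases i <;> fin_cases j <;>
    · simp [Matrix.mul_apply, Fin.sum_univ_two, hc]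
      try field_simp
      try ring

/-- For `k ≥ 1` and `n = 8k`: `caba = [[1, 2], [1/(4k), (2k+1)/(2k)]]`,
`cba = −[[1, 8k+2], [0, 1]]`, and `M = (caba)·(cba)^{k−1}·(caba)` has
`|tr M| = 4k + 1/(4k) > 2` and eigenvectors `(−4k, 1)` and `(4k−2, 1)`; hence
`M` is a special (hyperbolic) element of `W_{8k}` fixing `−4k` and `4k−2`. -/
theorem weierstrass_8k_special (k : ℕ) (hk : 1 ≤ k) :
    (Wc (8 * k) (by omega) * Wa * Wb (8 * k) (by omega) * Wa =
      (⟨!![1, 2; 1 / (4 * (k : ℝ)), (2 * (k : ℝ) + 1) / (2 * (k : ℝ))], by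
        have hk' : (k : ℝ) ≠ 0 := by positivity
        norm_num [Matrix.det_fin_two_of]
        field_simp
        ring⟩ : SL2R)) ∧
    (Wc (8 * k) (by omega) * Wb (8 * k) (by omega) * Wa =
      -(show SL2R from
        ⟨!![1, 8 * (k : ℝ) + 2; 0, 1], by norm_num [Matrix.det_fin_two_of]⟩)) ∧
    |Matrix.trace ((specialW8k k hk : SL2R) : Matrix (Fin 2) (Fin 2) ℝ)| =
      4 * (k : ℝ) + 1 / (4 * (k : ℝ)) ∧
    IsHyperbolic (specialW8k k hk) ∧
    FixesBoundary (specialW8k k hk) (-(4 * (k : ℝ))) ∧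
    FixesBoundary (specialW8k k hk) (4 * (k : ℝ) - 2) ∧
    specialW8k k hk ∈ W (8 * k) (by omega) := by
  have hkpos : (0:ℝ) < (k:ℝ) := by exact_mod_cast hk
  have hk0 : (k:ℝ) ≠ 0 := ne_of_gt hkpos
  have hpos : 0 < 8 * k := by omega
  have hT : 0 < 4 * (k:ℝ) + 1 / (4 * (k:ℝ)) := by positivity
  -- trace
  have htr : |Matrix.trace ((specialW8k k hk : SL2R) : Matrix (Fin 2) (Fin 2) ℝ)| =
      4 * (k : ℝ) + 1 / (4 * (k : ℝ)) := by
    rw [M_coe k hk, Matrix.trace_smul]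
    simp only [Matrix.trace_fin_two_of, smul_eq_mul]
    rw [abs_mul, abs_pow, abs_neg, abs_one, one_pow, one_mul]
    rw [abs_of_pos]
    · field_simp
      ring
    · have hk1 : (1:ℝ) ≤ (k:ℝ) := by exact_mod_cast hk
      have h2 : (0:ℝ) < 1 / (4 * (k:ℝ)) := by positivity
      linarith
  refine ⟨?_, ?_, htr, ?_, ?_, ?_, ?_⟩
  · apply Subtype.coe_injective
    show ((Wc (8*k) hpos * Wa * Wb (8*k) hpos * Wa : SL2R) : Matrix (Fin 2) (Fin 2) ℝ) =
      !![1, 2; 1 / (4 * (k : ℝ)), (2 * (k : ℝ) + 1) / (2 * (k : ℝ))]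
    rw [caba_coe _ hpos]
    ext i j
    fin_cases i <;> fin_cases j <;>
      · simp
        try push_cast
        try field_simp
        try ring
  · apply Subtype.coe_injective
    show ((Wc (8*k) hpos * Wb (8*k) hpos * Wa : SL2R) : Matrix (Fin 2) (Fin 2) ℝ) =
      -(!![1, 8 * (k : ℝ) + 2; 0, 1])
    rw [cba_coe _ hpos]
    push_cast
    rfl
  · rw [_root_.IsHyperbolic, htr]
    have h1 : (4:ℝ) ≤ 4 * (k:ℝ) := by
      have : (1:ℝ) ≤ (k:ℝ) := by exact_mod_cast hk
      linarith
    have h2 : (0:ℝ) < 1 / (4 * (k:ℝ)) := by positivity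
    linarith
  · refine ⟨((-1:ℝ)^(k-1)) * (1 / (4 * (k:ℝ))), ?_, ?_⟩
    · apply mul_ne_zero
      · exact pow_ne_zero _ (by norm_num)
      · positivity
    · rw [M_coe k hk, Matrix.smul_mulVec]
      have : (!![2*(k:ℝ) - 1/2, 8*(k:ℝ)^2 - 2*k - 1;
          1/2 + 1/(8*(k:ℝ)), 2*(k:ℝ) + 1/2 + 1/(4*(k:ℝ))]).mulVec ![-(4 * (k:ℝ)), 1]
          = (1 / (4 * (k:ℝ))) • ![-(4 * (k:ℝ)), 1] := by
        funext i
        fin_cases i <;>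
          · simp [Matrix.mulVec, dotProduct, Fin.sum_univ_two]
            field_simp
            ring
      rw [this, smul_smul]
  · refine ⟨((-1:ℝ)^(k-1)) * (4 * (k:ℝ)), ?_, ?_⟩
    · apply mul_ne_zero
      · exact pow_ne_zero _ (by norm_num)
      · positivity
    · rw [M_coe k hk, Matrix.smul_mulVec]
      have : (!![2*(k:ℝ) - 1/2, 8*(k:ℝ)^2 - 2*k - 1;
          1/2 + 1/(8*(k:ℝ)), 2*(k:ℝ) + 1/2 + 1/(4*(k:ℝ))]).mulVec ![4 * (k:ℝ) - 2, 1]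
          = (4 * (k:ℝ)) • ![4 * (k:ℝ) - 2, 1] := by
        funext i
        fin_cases i <;>
          · simp [Matrix.mulVec, dotProduct, Fin.sum_univ_two]
            field_simp
            ring
      rw [this, smul_smul]
  · have ha : Wa ∈ W (8*k) hpos := Subgroup.subset_closure (by simp)
    have hb : Wb (8*k) hpos ∈ W (8*k) hpos := Subgroup.subset_closure (by simp)
    have hc : Wc (8*k) hpos ∈ W (8*k) hpos := Subgroup.subset_closure (by simp)
    exact mul_mem (mul_mem (mul_mem (mul_mem (mul_mem hc ha) hb) ha)
      (pow_mem (mul_mem (mul_mem hc hb) ha) _))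
      (mul_mem (mul_mem (mul_mem hc ha) hb) ha)
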